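/- (One-step explicit solution, equation (2.3).) Let x0 ≥ y0 > 0 and set N = √(4x0² + 6x0y0 + 6y0²), x1 = (1/15)(14x0 + 3y0 − 2N), y1 = (1/5)(−2x0 + y0 + N). Then x1 ≥ y1 > 0, and the triples (x0, y0, y0) and (x1, y1, y1) satisfy the one-step compatibility equations: x0 = x1 + φ(x1; y1, y1) and y0 = y1 + φ(y1; y1, x1). -/

import Mathlib

noncomputable section

/-- Δ-Y transfer term `φ(x; y, z) = (x+y)(x+z)/(2(x+y+z))`. -/
def phi (x y z : ℝ) : ℝ := (x + y) * (x + z) / (2 * (x + y + z))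

theorem stmt4 (x0 y0 : ℝ) (hy : 0 < y0) (hle : y0 ≤ x0)
    (N x1 y1 : ℝ)
    (hN : N = Real.sqrt (4 * x0 ^ 2 + 6 * x0 * y0 + 6 * y0 ^ 2))
    (hx1 : x1 = (14 * x0 + 3 * y0 - 2 * N) / 15)
    (hy1 : y1 = (-2 * x0 + y0 + N) / 5) :
    0 < y1 ∧ y1 ≤ x1 ∧
    x0 = x1 + phi x1 y1 y1 ∧ y0 = y1 + phi y1 y1 x1 := by
  have hx0 : 0 < x0 := lt_of_lt_of_le hy hle
  have hN0 : 0 ≤ N := hN ▸ Real.sqrt_nonneg _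
  have hN2 : N ^ 2 = 4 * x0 ^ 2 + 6 * x0 * y0 + 6 * y0 ^ 2 := by
    rw [hN, Real.sq_sqrt] <;> nlinarith
  have hNlt : 2 * x0 - y0 < N := by nlinarith
  have hNle : N ≤ 4 * x0 := by nlinarith
  have hy1pos : 0 < y1 := by rw [hy1]; linarith
  have hx1ge : y1 ≤ x1 := by rw [hx1, hy1]; linarith
  have hS : (0:ℝ) < 2 * (x1 + y1 + y1) := by nlinarith
  have hS' : (0:ℝ) < 2 * (y1 + y1 + x1) := by nlinarith
  refine ⟨hy1pos, hx1ge, ?_, ?_⟩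
  · unfold phi
    rw [eq_comm]
    have h3 : x1 + y1 + y1 ≠ 0 := by linarith
    field_simp
    subst hx1 hy1
    nlinarith [hN2]
  · unfold phi
    rw [eq_comm]
    have h3 : y1 + y1 + x1 ≠ 0 := by linarith
    have h4 : y1 * (1 + 1) + x1 ≠ 0 := by linarith
    field_simp
    subst hx1 hy1
    nlinarith [hN2]
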